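/- arXiv:0801.1060 — 2 statements merged into one kernel-verified Lean document; each statement's English description precedes it below -/
import Mathlib

section
/- For any j ≥ 0, F_{2^j + 1} consists exactly of the words of the form f* f*_1, where f* = f*_1 f*_2 … f*_{2^j} ranges over all binary words of length 2^j; i.e., a word of length 2^j + 1 is in F_{2^j+1} if and only if its first and last letters are equal. -/
/-- The sliding-block map ψ on binary words: ψ(u₁…uₙ) = u*₁…u*ₙ₋₁ with u*ᵢ = uᵢ + uᵢ₊₁ (mod 2). -/
def psiW : List (ZMod 2) → List (ZMod 2)
  | a :: b :: rest => (a + b) :: psiW (b :: rest)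
  | _ => []

/-- The forbidden sets: F 1 = {0}, F (k+1) = ψ⁻¹(F k). -/
def F : ℕ → Set (List (ZMod 2))
  | 0 => ∅
  | 1 => {[(0 : ZMod 2)]}
  | (k + 1) => psiW ⁻¹' F k

lemma psiW_length : ∀ u : List (ZMod 2), (psiW u).length = u.length - 1
  | [] => rfl
  | [_] => rfl
  | a :: b :: rest => by simp [psiW, psiW_length (b :: rest)]

lemma psiW_getD : ∀ (u : List (ZMod 2)) (i : ℕ), i + 1 < u.length →
    (psiW u).getD i 0 = u.getD i 0 + u.getD (i + 1) 0
  | [], i, h => by simp at h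
  | [_], i, h => by simp at h
  | a :: b :: rest, 0, _ => by simp [psiW]
  | a :: b :: rest, i + 1, h => by
    simp only [psiW, List.getD_cons_succ]
    exact psiW_getD (b :: rest) i (by simpa using Nat.lt_of_succ_lt_succ h)

lemma iter_length (k : ℕ) (u : List (ZMod 2)) : (psiW^[k] u).length = u.length - k := by
  induction k with
  | zero => simp
  | succ k ih => rw [Function.iterate_succ_apply', psiW_length, ih]; omega

lemma iter_getD (k : ℕ) (u : List (ZMod 2)) (i : ℕ) (h : i + k < u.length) :
    (psiW^[k] u).getD i 0 =
      ∑ t ∈ Finset.range (k + 1), (k.choose t : ZMod 2) * u.getD (i + t) 0 := by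
  induction k generalizing i with
  | zero => simp
  | succ k ih =>
    rw [Function.iterate_succ_apply', psiW_getD _ i (by rw [iter_length]; omega),
      ih i (by omega), ih (i + 1) (by omega)]
    have e1 : ∀ t, u.getD (i + 1 + t) 0 = u.getD (i + (t + 1)) 0 := by
      intro t; congr 1; omega
    simp only [e1]
    rw [Finset.sum_range_succ' (fun t => ((k + 1).choose t : ZMod 2) * u.getD (i + t) 0),
      Finset.sum_range_succ' (fun t => (k.choose t : ZMod 2) * u.getD (i + t) 0),
      Finset.sum_range_succ (fun t => (k.choose t : ZMod 2) * u.getD (i + (t + 1)) 0)]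
    simp only [Nat.choose_succ_succ, Nat.choose_zero_right, Nat.cast_add, Nat.cast_one,
      add_mul]
    rw [Finset.sum_add_distrib,
      Finset.sum_range_succ (fun x => (k.choose x : ZMod 2) * u.getD (i + (x + 1)) 0),
      Finset.sum_range_succ (fun x => (k.choose (x + 1) : ZMod 2) * u.getD (i + (x + 1)) 0)]
    simp only [Nat.choose_succ_self, Nat.cast_zero, zero_mul, add_zero]
    ring

lemma mem_F_succ (n : ℕ) (u : List (ZMod 2)) : u ∈ F (n + 1) ↔ psiW^[n] u = [0] := by
  induction n generalizing u with
  | zero => simp [F]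
  | succ n ih =>
    have : u ∈ F (n + 2) ↔ psiW u ∈ F (n + 1) := Iff.rfl
    rw [this, ih, Function.iterate_succ_apply]

/-- a word of length 2^j + 1 is in F_{2^j+1} iff its first and last letters agree. -/
theorem stmt_7 (j : ℕ) (u : List (ZMod 2)) (hu : u.length = 2 ^ j + 1) :
    u ∈ F (2 ^ j + 1) ↔ u.getD 0 0 = u.getD (2 ^ j) 0 := by
  rw [mem_F_succ]
  have hlen : (psiW^[2 ^ j] u).length = 1 := by rw [iter_length, hu]; omega
  obtain ⟨x, hx⟩ := List.length_eq_one_iff.mp hlen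
  have hx0 : x = (psiW^[2 ^ j] u).getD 0 0 := by rw [hx]; rfl
  have hget := iter_getD (2 ^ j) u 0 (by omega)
  simp only [zero_add] at hget
  have hsum : ∑ t ∈ Finset.range (2 ^ j + 1), ((2 ^ j).choose t : ZMod 2) * u.getD t 0
      = u.getD 0 0 + u.getD (2 ^ j) 0 := by
    rw [Finset.sum_range_succ, Nat.choose_self]
    have : ∑ t ∈ Finset.range (2 ^ j), ((2 ^ j).choose t : ZMod 2) * u.getD t 0
        = u.getD 0 0 := by
      rw [Finset.sum_eq_single 0]
      · simp
      · intro t ht hne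
        have htlt := Finset.mem_range.mp ht
        have : (2 : ℕ) ∣ (2 ^ j).choose t :=
          Nat.Prime.dvd_choose_pow Nat.prime_two hne (by omega)
        have : ((2 ^ j).choose t : ZMod 2) = 0 :=
          (ZMod.natCast_eq_zero_iff _ 2).mpr this
        simp [this]
      · simp
    rw [this]; push_cast; ring
  rw [hsum] at hget
  rw [hx]
  constructor
  · intro h
    have : x = 0 := by injection h
    rw [hx0, hget] at this
    have := this
    rw [add_eq_zero_iff_eq_neg, CharTwo.neg_eq] at this
    exact this
  · intro h
    have : x = 0 := by
      rw [hx0, hget, h, add_eq_zero_iff_eq_neg, CharTwo.neg_eq]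
    rw [this]
end

section
/- For any j ≥ 0 and any k with 2^j + 1 ≤ k ≤ 2^{j+1}, every period of every periodic bi-infinite sequence in the PFT X_k is a multiple of 2^{j+1}. -/
/-- ψ on bi-infinite binary sequences. -/
def psiZ (x : ℤ → ZMod 2) : ℤ → ZMod 2 := fun i => x i + x (i + 1)

/-- Length-`k` subword of `x` starting at index `i`. -/
def subword (x : ℤ → ZMod 2) (i : ℤ) (k : ℕ) : List (ZMod 2) :=
  (List.range k).map fun t => x (i + t)

/-- Membership in the PFT X_k: for some shift r ∈ {0,1}, no subword of σʳ(x) starting at an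
even index belongs to F k. -/
def inX (k : ℕ) (x : ℤ → ZMod 2) : Prop :=
  ∃ r : ℕ, r < 2 ∧ ∀ i : ℤ, Even i → subword x (i + r) k ∉ F k

lemma subword_succ (x : ℤ → ZMod 2) (i : ℤ) (k : ℕ) :
    subword x i (k+1) = x i :: subword x (i+1) k := by
  simp only [subword, List.range_succ_eq_map, bind_pure_comp, List.map_eq_map, List.map_map,
    List.map_cons, Function.comp_apply, Function.comp_def]
  refine congrArg₂ _ (by norm_num) ?_
  refine List.map_congr_left fun t _ => ?_
  congr 1
  push_cast
  ring

lemma F_succ_succ (k : ℕ) : F (k+2) = psiW ⁻¹' F (k+1) := rfl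

lemma psiW_subword (k : ℕ) : ∀ (x : ℤ → ZMod 2) (i : ℤ),
    psiW (subword x i (k+1)) = subword (psiZ x) i k := by
  induction k with
  | zero =>
    intro x i
    rw [subword_succ]
    rfl
  | succ k ih =>
    intro x i
    rw [subword_succ, subword_succ, subword_succ]
    show (x i + x (i+1)) :: psiW (x (i+1) :: subword x (i+1+1) k) = _
    rw [show x (i+1) :: subword x (i+1+1) k = subword x (i+1) (k+1) from (subword_succ ..).symm,
      ih]
    rfl

lemma F_iff (k : ℕ) : ∀ (x : ℤ → ZMod 2) (i : ℤ),
    subword x i (k+1) ∈ F (k+1) ↔ (psiZ^[k] x) i = 0 := by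
  induction k with
  | zero =>
    intro x i
    rw [subword_succ]
    simp [subword, F]
  | succ k ih =>
    intro x i
    rw [show k+1+1 = k+2 from rfl, F_succ_succ, Set.mem_preimage, psiW_subword, ih,
      Function.iterate_succ_apply]

lemma psiZ_pow (j : ℕ) : ∀ (x : ℤ → ZMod 2) (i : ℤ),
    (psiZ^[2^j] x) i = x i + x (i + 2^j) := by
  induction j with
  | zero => intro x i; simp [psiZ]
  | succ j ih =>
    intro x i
    have h2 : 2^(j+1) = 2^j + 2^j := by ring
    rw [h2, Function.iterate_add_apply, ih, ih, ih,
      show i + 2^j + 2^j = i + ((2:ℤ)^j + 2^j) by ring,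
      show ((2:ℤ)^j + 2^j) = 2^(j+1) by ring]
    have hc : x (i + 2^j) + x (i + 2^j) = 0 := CharTwo.add_self_eq_zero _
    linear_combination hc

lemma psiZ_iter_periodic (n : ℕ) (x : ℤ → ZMod 2) (p : ℕ) (hper : ∀ i, x (i+p) = x i) :
    ∀ i, (psiZ^[n] x) (i+p) = (psiZ^[n] x) i := by
  induction n with
  | zero => exact hper
  | succ n ih =>
    intro i
    rw [Function.iterate_succ_apply']
    show psiZ^[n] x (i+p) + psiZ^[n] x (i+p+1) = psiZ^[n] x i + psiZ^[n] x (i+1)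
    rw [ih i, show i+(p:ℤ)+1 = (i+1)+p by ring, ih (i+1)]

/-- for 2^j + 1 ≤ k ≤ 2^{j+1}, every period of a periodic sequence in X_k is a
multiple of 2^{j+1}. -/
theorem stmt_12 (j k : ℕ) (hk1 : 2 ^ j + 1 ≤ k) (hk2 : k ≤ 2 ^ (j + 1))
    (x : ℤ → ZMod 2) (hx : inX k x) (p : ℕ) (hp : 0 < p)
    (hper : ∀ i : ℤ, x (i + p) = x i) : 2 ^ (j + 1) ∣ p := by
  obtain ⟨r, hr, hF⟩ := hx
  set m := k - 1 with hmdef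
  have hk : k = m + 1 := by omega
  have hm1 : 2^j ≤ m := by omega
  have hm2 : m < 2^(j+1) := by
    have : 2^(j+1) = 2^j + 2^j := by ring
    omega
  set m' := m - 2^j with hm'def
  set M := psiZ^[m'] x with hM
  have hMper : ∀ i, M (i + p) = M i := psiZ_iter_periodic m' x p hper
  have hsplit : ∀ i, psiZ^[m] x i = M i + M (i + 2^j) := by
    intro i
    have hmm : m = 2^j + m' := by omega
    rw [hmm, Function.iterate_add_apply, psiZ_pow]
  have key : ∀ a b : ZMod 2, a + b ≠ 0 → b = a + 1 := by decide
  have hrel : ∀ i : ℤ, Even i → M (i + r + 2^j) = M (i + r) + 1 := by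
    intro i hi
    have h1 := hF i hi
    rw [hk, F_iff, hsplit] at h1
    exact key _ _ h1
  -- periodicity iterated
  have hMs : ∀ (s : ℕ) (i : ℤ), M (i + s * p) = M i := by
    intro s
    induction s with
    | zero => simp
    | succ s ih =>
      intro i
      have : i + ((s:ℤ)+1) * p = (i + s * p) + p := by ring
      push_cast
      rw [this, hMper, ih]
  rcases Nat.eq_zero_or_pos j with hj0 | hj1
  · -- j = 0 : show 2 ∣ p
    subst hj0
    rcases Nat.even_or_odd p with he | ho
    · simpa using (even_iff_two_dvd.mp he)
    · exfalso
      -- claim1 : ∀ even i, M (i + r + 2) = M (i + r)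
      have claim1 : ∀ i : ℤ, Even i → M (i + r + 2) = M (i + r) := by
        intro i hi
        have e2 : Even (i + p + 1) := by
          obtain ⟨a, ha⟩ := hi
          obtain ⟨b, hb⟩ := ho
          refine ⟨a + b + 1, by push_cast [ha, hb]; ring⟩
        have h1 := hrel (i + p + 1) e2
        simp only [pow_zero] at h1 hrel
        have h0 := hrel i hi
        have e1 : M (i + r + 2) = M ((i + p + 1) + r + 1) := by
          rw [show (i + (p:ℤ) + 1) + r + 1 = (i + r + 2) + p by ring, hMper]
        have e2' : M ((i + p + 1) + r) = M (i + r + 1) := by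
          rw [show (i + (p:ℤ) + 1) + r = (i + r + 1) + p by ring, hMper]
        rw [e1, h1, e2', h0]
        have : (1 + 1 : ZMod 2) = 0 := by decide
        rw [add_assoc, this, add_zero]
      have claim2 : ∀ u : ℕ, M (r + 2 * u) = M r := by
        intro u
        induction u with
        | zero => simp
        | succ u ih =>
          have heven : Even ((2:ℤ) * u) := ⟨u, by ring⟩
          have := claim1 (2 * u) heven
          rw [show (2:ℤ)*u + r + 2 = r + 2*((u:ℤ)+1) by ring,
            show (2:ℤ)*u + r = r + 2*u by ring] at this
          push_cast
          rw [this, ih]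
      have h0 := hrel 0 Even.zero
      simp only [pow_zero, zero_add] at h0
      obtain ⟨b0, hb0⟩ := ho
      have hp1 : p + 1 = 2 * ((p+1)/2) := by omega
      have e3 : M ((r:ℤ) + 1) = M r := by
        have hcast : ((p:ℤ) + 1) = 2 * (((p+1)/2 : ℕ) : ℤ) := by exact_mod_cast hp1
        have h4 := hMper (r + 1)
        have h5 := claim2 ((p+1)/2)
        rw [show (r:ℤ) + 2 * (((p+1)/2 : ℕ) : ℤ) = r + 1 + p by linear_combination -hcast] at h5
        rw [← h4, h5]
      rw [e3] at h0
      simp at h0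
  · -- j ≥ 1
    by_contra hnd
    obtain ⟨v, q, hq_odd, hpeq⟩ := Nat.exists_eq_two_pow_mul_odd (by omega : p ≠ 0)
    have hvle : v ≤ j := by
      by_contra hv
      exact hnd (dvd_trans (pow_dvd_pow 2 (by omega : j + 1 ≤ v)) ⟨q, hpeq⟩)
    have hceven : Even ((2:ℤ)^j) := by
      obtain ⟨j', rfl⟩ : ∃ j', j = j' + 1 := ⟨j - 1, by omega⟩
      exact ⟨2^j', by ring⟩
    -- claim : M (r + u * 2^j) = M r + u
    have claim : ∀ u : ℕ, M (r + u * 2^j) = M r + (u : ZMod 2) := by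
      intro u
      induction u with
      | zero => simp
      | succ u ih =>
        have heven : Even ((u:ℤ) * 2^j) := hceven.mul_left _
        have h1 := hrel ((u:ℤ) * 2^j) heven
        rw [show (u:ℤ)*2^j + r + 2^j = r + ((u:ℤ)+1)*2^j by ring,
          show (u:ℤ)*2^j + r = r + u*2^j by ring] at h1
        push_cast
        rw [h1, ih]
        ring
    have hkeyN : q * 2^j = 2^(j-v) * p := by
      rw [hpeq, ← mul_assoc, ← pow_add, Nat.sub_add_cancel hvle, mul_comm]
    have hkey : (q:ℤ) * 2^j = ((2^(j-v) : ℕ) : ℤ) * p := by exact_mod_cast hkeyN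
    have h1 := claim q
    have h2 := hMs (2^(j-v)) r
    rw [show (r:ℤ) + q * 2^j = r + ((2^(j-v):ℕ) : ℤ) * p by rw [hkey]] at h1
    rw [h2] at h1
    obtain ⟨w, hw⟩ := hq_odd
    rw [hw] at h1
    push_cast at h1
    have h2' : (2 : ZMod 2) = 0 := by decide
    rw [h2', zero_mul, zero_add] at h1
    simp at h1
end
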